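/- Let G be a discrete group with length function ℓ satisfying a Haagerup inequality with constants C, k. For t > 0 and n ∈ ℕ, define φ_{n,t}(g) = e^{-t·ℓ(g)} if ℓ(g) ≤ n and 0 otherwise. Then for every f with λ(f) bounded on ℓ²(G): ‖λ(φ_{n,t}·f) - λ(e^{-t·ℓ}·f)‖ ≤ C·(sup_{m > n} e^{-t·m}(1+m)^k)·‖λ(f)‖, and this supremum tends to 0 as n → ∞ for fixed t > 0. -/

import Mathlib

open Filter

/-- `T` is the convolution operator `λ(f)` on `ℓ²(G)`: `(T h)(y) = ∑_x f(x) h(x⁻¹ y)`. -/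
def IsConvOp {G : Type*} [Group G] (f : G → ℂ)
    (T : lp (fun _ : G => ℂ) 2 →L[ℂ] lp (fun _ : G => ℂ) 2) : Prop :=
  ∀ (h : lp (fun _ : G => ℂ) 2) (y : G), T h y = ∑' x : G, f x * h (x⁻¹ * y)

open scoped ENNReal Topology

noncomputable section ConvAuxSection

namespace ConvAux

set_option linter.unusedSectionVars false

variable {G : Type*} [Group G] [DecidableEq G]

lemma memℓp_comp_equiv (e : G ≃ G) (h : lp (fun _ : G => ℂ) 2) :
    Memℓp (fun y => h (e y)) 2 := by
  apply memℓp_gen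
  have hs : Summable fun i : G => ‖h i‖ ^ (2 : ℝ≥0∞).toReal :=
    (lp.memℓp h).summable (by norm_num)
  exact (e.summable_iff (f := fun i : G => ‖h i‖ ^ (2 : ℝ≥0∞).toReal)).2 hs

/-- left translation of an `ℓ²` element -/
def translLp (x : G) (h : lp (fun _ : G => ℂ) 2) : lp (fun _ : G => ℂ) 2 :=
  ⟨fun y => h (x⁻¹ * y), memℓp_comp_equiv (Equiv.mulLeft x⁻¹) h⟩

@[simp] lemma translLp_apply (x : G) (h : lp (fun _ : G => ℂ) 2) (y : G) :
    translLp x h y = h (x⁻¹ * y) := rfl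

lemma norm_translLp (x : G) (h : lp (fun _ : G => ℂ) 2) : ‖translLp x h‖ = ‖h‖ := by
  rw [lp.norm_eq_tsum_rpow (by norm_num), lp.norm_eq_tsum_rpow (by norm_num) h]
  congr 1
  exact (Equiv.mulLeft x⁻¹).tsum_eq (fun i => ‖h i‖ ^ (2 : ℝ≥0∞).toReal)

/-- left translation as a continuous linear map on `ℓ²` -/
def translCLM (x : G) : lp (fun _ : G => ℂ) 2 →L[ℂ] lp (fun _ : G => ℂ) 2 :=
  LinearMap.mkContinuous
    { toFun := translLp x
      map_add' := fun a b => by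
        apply lp.ext; funext y
        simp [translLp, lp.coeFn_add, Pi.add_apply]
        rfl
      map_smul' := fun c a => by
        apply lp.ext; funext y
        simp [translLp, lp.coeFn_smul] }
    1 (fun h => by rw [one_mul]; exact (norm_translLp x h).le)

@[simp] lemma translCLM_apply (x : G) (h : lp (fun _ : G => ℂ) 2) (y : G) :
    translCLM x h y = h (x⁻¹ * y) := rfl

/-- convolution with a function restricted to a finite set -/
def finConvOp (u : G → ℂ) (F : Finset G) :
    lp (fun _ : G => ℂ) 2 →L[ℂ] lp (fun _ : G => ℂ) 2 :=
  ∑ x ∈ F, u x • translCLM x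

lemma finConvOp_apply (u : G → ℂ) (F : Finset G) (h : lp (fun _ : G => ℂ) 2) (y : G) :
    finConvOp u F h y = ∑ x ∈ F, u x * h (x⁻¹ * y) := by
  simp [finConvOp, ContinuousLinearMap.sum_apply, lp.coeFn_sum, lp.coeFn_smul,
    Finset.sum_apply, smul_eq_mul]
  erw [Finset.sum_apply]
  simp

lemma isConvOp_finConvOp (u : G → ℂ) (F : Finset G) :
    ∀ (h : lp (fun _ : G => ℂ) 2) (y : G),
      finConvOp u F h y = ∑' x : G, (if x ∈ F then u x else 0) * h (x⁻¹ * y) := by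
  intro h y
  rw [finConvOp_apply, tsum_eq_sum (s := F) (fun x hx => by simp [hx])]
  exact Finset.sum_congr rfl fun x hx => by simp [hx]

variable (t : ℝ) (k : ℕ)

lemma a_tendsto (ht : 0 < t) :
    Tendsto (fun m : ℕ => Real.exp (-t * m) * (1 + (m : ℝ)) ^ k) atTop (𝓝 0) := by
  have hc : Tendsto (fun m : ℕ => t * (1 + (m : ℝ))) atTop atTop := by
    apply Tendsto.const_mul_atTop ht
    exact tendsto_atTop_add_const_left _ _ tendsto_natCast_atTop_atTop
  have h0 := ((Real.tendsto_pow_mul_exp_neg_atTop_nhds_zero k).comp hc).const_mul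
    (Real.exp t / t ^ k)
  rw [mul_zero] at h0
  convert h0 using 2 with m
  have ht' : t ≠ 0 := ht.ne'
  have he : Real.exp (-(t * (1 + (m : ℝ)))) = Real.exp (-t) * Real.exp (-t * m) := by
    rw [← Real.exp_add]; ring_nf
  simp only [Function.comp_apply, mul_pow, he, Real.exp_neg]
  field_simp [Real.exp_ne_zero]
  have h2 : Real.exp (-(t * (m : ℝ))) * Real.exp (t + t * m) = Real.exp t := by
    rw [← Real.exp_add]; ring_nf
  have h4 : Real.exp (t * (1 + (m : ℝ))) = Real.exp (t + t * m) := by ring_nf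
  rw [← Real.exp_add]; ring_nf

lemma a_nonneg (m : ℕ) : 0 ≤ Real.exp (-t * m) * (1 + (m : ℝ)) ^ k := by positivity

lemma a_bddAbove (ht : 0 < t) :
    BddAbove (Set.range fun m : ℕ => Real.exp (-t * m) * (1 + (m : ℝ)) ^ k) :=
  (a_tendsto t k ht).bddAbove_range

lemma S_bddAbove (ht : 0 < t) (n : ℕ) :
    BddAbove (Set.range fun m : {m : ℕ // n < m} =>
      Real.exp (-t * m) * (1 + (m : ℝ)) ^ k) := by
  obtain ⟨M, hM⟩ := a_bddAbove t k ht
  exact ⟨M, by rintro x ⟨m, rfl⟩; exact hM ⟨m, rfl⟩⟩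

lemma a_le_S (ht : 0 < t) (n : ℕ) {m : ℕ} (hm : n < m) :
    Real.exp (-t * m) * (1 + (m : ℝ)) ^ k ≤
      ⨆ m : {m : ℕ // n < m}, Real.exp (-t * m) * (1 + (m : ℝ)) ^ k :=
  le_ciSup (S_bddAbove t k ht n) ⟨m, hm⟩

lemma S_nonneg (ht : 0 < t) (n : ℕ) :
    0 ≤ ⨆ m : {m : ℕ // n < m}, Real.exp (-t * m) * (1 + (m : ℝ)) ^ k :=
  (a_nonneg t k (n + 1)).trans (a_le_S t k ht n (Nat.lt_succ_self n))

lemma S_tendsto (ht : 0 < t) :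
    Tendsto (fun n : ℕ => ⨆ m : {m : ℕ // n < m}, Real.exp (-t * m) * (1 + (m : ℝ)) ^ k)
      atTop (𝓝 0) := by
  rw [NormedAddCommGroup.tendsto_nhds_zero]
  intro ε hε
  obtain ⟨N, hN⟩ := (Metric.tendsto_atTop.1 (a_tendsto t k ht)) (ε / 2) (half_pos hε)
  filter_upwards [eventually_ge_atTop N] with n hn
  rw [Real.norm_eq_abs, abs_of_nonneg (S_nonneg t k ht n)]
  have : Nonempty {m : ℕ // n < m} := ⟨⟨n + 1, Nat.lt_succ_self n⟩⟩
  refine lt_of_le_of_lt (ciSup_le fun m => ?_) (half_lt_self hε)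
  have := hN m (hn.trans m.2.le)
  rw [Real.dist_eq, sub_zero, abs_of_nonneg (a_nonneg t k m)] at this
  exact this.le

end ConvAux

end ConvAuxSection

theorem stmt_10 {G : Type*} [Group G]
    -- a length function on G
    (ℓ : G → ℕ) (hℓe : ℓ 1 = 0) (hℓinv : ∀ g : G, ℓ g⁻¹ = ℓ g)
    (hℓsub : ∀ g h : G, ℓ (g * h) ≤ ℓ g + ℓ h)
    -- the Haagerup (rapid decay) inequality with constants C, k
    (C : ℝ) (hC : 0 < C) (k : ℕ)
    (haagerup : ∀ (f : G → ℂ), (Function.support f).Finite →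
      ∀ T : lp (fun _ : G => ℂ) 2 →L[ℂ] lp (fun _ : G => ℂ) 2, IsConvOp f T →
      ‖T‖ ≤ C * (∑' g : G, ‖f g‖ ^ 2 * (1 + (ℓ g : ℝ)) ^ (2 * k)) ^ ((1 : ℝ) / 2))
    (t : ℝ) (ht : 0 < t) (n : ℕ)
    (f : G → ℂ)
    (T Tt Tnt : lp (fun _ : G => ℂ) 2 →L[ℂ] lp (fun _ : G => ℂ) 2)
    (hT : IsConvOp f T)
    (hTt : IsConvOp (fun g => Real.exp (-t * ℓ g) * f g) Tt)
    (hTnt : IsConvOp (fun g => if ℓ g ≤ n then Real.exp (-t * ℓ g) * f g else 0) Tnt) :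
    ‖Tnt - Tt‖ ≤
      C * (⨆ m : {m : ℕ // n < m}, Real.exp (-t * m) * (1 + (m : ℝ)) ^ k) * ‖T‖ ∧
    Tendsto (fun n : ℕ => ⨆ m : {m : ℕ // n < m}, Real.exp (-t * m) * (1 + (m : ℝ)) ^ k)
      atTop (nhds 0) := by
  classical
  refine ⟨?_, ConvAux.S_tendsto t k ht⟩
  set S : ℝ := ⨆ m : {m : ℕ // n < m}, Real.exp (-t * m) * (1 + (m : ℝ)) ^ k with hS
  have hS0 : 0 ≤ S := ConvAux.S_nonneg t k ht n
  -- the symbol of `Tnt - Tt`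
  set u : G → ℂ := fun g =>
    (if ℓ g ≤ n then (Real.exp (-t * ℓ g) : ℂ) * f g else 0) -
      (Real.exp (-t * ℓ g) : ℂ) * f g with hu
  -- `f` as an `ℓ²` element
  set ff : lp (fun _ : G => ℂ) 2 := T (lp.single 2 (1 : G) (1 : ℂ)) with hffdef
  have hff : ∀ x : G, ff x = f x := by
    intro x
    rw [hffdef, hT]
    rw [tsum_eq_single x ?_]
    · rw [inv_mul_cancel, lp.single_apply_self, mul_one]
    · intro b hb
      have hz : (lp.single 2 (1 : G) (1 : ℂ) : ∀ _ : G, ℂ) (b⁻¹ * x) = 0 := by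
        apply lp.single_apply_ne
        simp only [ne_eq, inv_mul_eq_one]
        exact hb
      rw [hz, mul_zero]
  have hffT : ‖ff‖ ≤ ‖T‖ := by
    have h1 : ‖(lp.single 2 (1 : G) (1 : ℂ) : lp (fun _ : G => ℂ) 2)‖ = 1 := by
      have h := lp.norm_single (E := fun _ : G => ℂ) (p := 2) (by norm_num)
        (1 : G) (1 : ℂ)
      simpa using h
    have h2 := T.le_opNorm (lp.single 2 (1 : G) (1 : ℂ))
    rw [h1, mul_one] at h2
    exact h2
  -- summability of convolution integrands
  have hsum : ∀ v : G → ℂ, (∀ x, ‖v x‖ ≤ ‖f x‖) →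
      ∀ (h : lp (fun _ : G => ℂ) 2) (y : G),
        Summable fun x : G => v x * h (x⁻¹ * y) := by
    intro v hv h y
    set th : lp (fun _ : G => ℂ) 2 :=
      ⟨fun x => h (x⁻¹ * y), ConvAux.memℓp_comp_equiv ((Equiv.inv G).trans (Equiv.mulRight y)) h⟩
      with hth
    have hconj : ((2 : ℝ≥0∞).toReal).HolderConjugate ((2 : ℝ≥0∞).toReal) := by
      rw [show ((2 : ℝ≥0∞).toReal) = 2 by norm_num]
      exact Real.HolderConjugate.two_two
    have hm := lp.summable_mul hconj ff th
    apply Summable.of_norm_bounded hm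
    intro x
    rw [norm_mul]
    have : (th : ∀ _ : G, ℂ) x = h (x⁻¹ * y) := rfl
    rw [this]
    apply mul_le_mul_of_nonneg_right _ (norm_nonneg _)
    rw [hff]
    exact hv x
  have hexp_le : ∀ g : G, Real.exp (-t * ℓ g) ≤ 1 := fun g =>
    Real.exp_le_one_iff.2 (by
      have : (0 : ℝ) ≤ t * ℓ g := mul_nonneg ht.le (Nat.cast_nonneg _)
      linarith)
  have hnorm_exp : ∀ g : G, ‖((Real.exp (-t * ℓ g) : ℝ) : ℂ) * f g‖ =
      Real.exp (-t * ℓ g) * ‖f g‖ := by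
    intro g
    rw [norm_mul, Complex.norm_real, Real.norm_eq_abs, abs_of_pos (Real.exp_pos _)]
  have hu_le : ∀ x : G, ‖u x‖ ≤ ‖f x‖ := by
    intro x
    rw [hu]
    by_cases hx : ℓ x ≤ n
    · simp only [hx, if_true, sub_self, norm_zero]
      exact norm_nonneg _
    · simp only [hx, if_false, zero_sub, norm_neg]
      rw [hnorm_exp]
      calc Real.exp (-t * ℓ x) * ‖f x‖ ≤ 1 * ‖f x‖ :=
        mul_le_mul_of_nonneg_right (hexp_le x) (norm_nonneg _)
      _ = ‖f x‖ := one_mul _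
  -- `Tnt - Tt` is the convolution operator with symbol `u`
  have hD : ∀ (h : lp (fun _ : G => ℂ) 2) (y : G),
      ((Tnt - Tt) h) y = ∑' x : G, u x * h (x⁻¹ * y) := by
    intro h y
    have s1 : Summable fun x : G =>
        (if ℓ x ≤ n then (Real.exp (-t * ℓ x) : ℂ) * f x else 0) * h (x⁻¹ * y) := by
      apply hsum _ _ h y
      intro x
      by_cases hx : ℓ x ≤ n
      · simp only [hx, if_true]
        rw [hnorm_exp]
        calc Real.exp (-t * ℓ x) * ‖f x‖ ≤ 1 * ‖f x‖ :=
          mul_le_mul_of_nonneg_right (hexp_le x) (norm_nonneg _)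
        _ = ‖f x‖ := one_mul _
      · simp only [hx, if_false, norm_zero]
        exact norm_nonneg _
    have s2 : Summable fun x : G => ((Real.exp (-t * ℓ x) : ℝ) : ℂ) * f x * h (x⁻¹ * y) := by
      apply hsum _ _ h y
      intro x
      rw [hnorm_exp]
      calc Real.exp (-t * ℓ x) * ‖f x‖ ≤ 1 * ‖f x‖ :=
        mul_le_mul_of_nonneg_right (hexp_le x) (norm_nonneg _)
      _ = ‖f x‖ := one_mul _
    calc ((Tnt - Tt) h) y = Tnt h y - Tt h y := by
          rw [ContinuousLinearMap.sub_apply, lp.coeFn_sub, Pi.sub_apply]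
    _ = (∑' x : G, (if ℓ x ≤ n then (Real.exp (-t * ℓ x) : ℂ) * f x else 0) * h (x⁻¹ * y)) -
        ∑' x : G, ((Real.exp (-t * ℓ x) : ℝ) : ℂ) * f x * h (x⁻¹ * y) := by
          rw [hTnt h y, hTt h y]
    _ = ∑' x : G, ((if ℓ x ≤ n then (Real.exp (-t * ℓ x) : ℂ) * f x else 0) * h (x⁻¹ * y) -
          ((Real.exp (-t * ℓ x) : ℝ) : ℂ) * f x * h (x⁻¹ * y)) := (Summable.tsum_sub s1 s2).symm
    _ = ∑' x : G, u x * h (x⁻¹ * y) := tsum_congr fun x => by rw [hu, sub_mul]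
  set M : ℝ := C * S * ‖T‖ with hM
  have hM0 : 0 ≤ M := by positivity
  -- uniform bound for the truncated convolution operators
  have hUF : ∀ F : Finset G, ‖ConvAux.finConvOp u F‖ ≤ M := by
    intro F
    have hsupp : (Function.support fun x => if x ∈ F then u x else 0).Finite := by
      apply F.finite_toSet.subset
      intro x hx
      rw [Function.mem_support] at hx
      by_contra hxF
      exact hx (if_neg fun hmem => hxF hmem)
    have hle := haagerup _ hsupp (ConvAux.finConvOp u F) (ConvAux.isConvOp_finConvOp u F)
    refine hle.trans ?_
    rw [hM, mul_assoc]
    apply mul_le_mul_of_nonneg_left _ hC.le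
    -- bound the weighted sum
    have hpt : ∀ g : G, ‖(if g ∈ F then u g else 0)‖ ^ 2 * (1 + (ℓ g : ℝ)) ^ (2 * k) ≤
        S ^ 2 * ‖f g‖ ^ 2 := by
      intro g
      by_cases hgF : g ∈ F
      · simp only [hgF, if_true]
        by_cases hg : ℓ g ≤ n
        · have : u g = 0 := by rw [hu]; simp [hg]
          rw [this, norm_zero]
          simp only [ne_eq, OfNat.ofNat_ne_zero, not_false_eq_true, zero_pow, zero_mul]
          positivity
        · push_neg at hg
          have hug : ‖u g‖ = Real.exp (-t * ℓ g) * ‖f g‖ := by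
            rw [hu]
            simp only [hg.not_ge, if_false, zero_sub, norm_neg]
            exact hnorm_exp g
          rw [hug]
          have hkey : (Real.exp (-t * ℓ g) * (1 + (ℓ g : ℝ)) ^ k) ^ 2 ≤ S ^ 2 := by
            apply pow_le_pow_left₀ (by positivity)
            exact ConvAux.a_le_S t k ht n hg
          calc (Real.exp (-t * ℓ g) * ‖f g‖) ^ 2 * (1 + (ℓ g : ℝ)) ^ (2 * k)
              = (Real.exp (-t * ℓ g) * (1 + (ℓ g : ℝ)) ^ k) ^ 2 * ‖f g‖ ^ 2 := by
                rw [mul_comm 2 k, pow_mul]; ring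
          _ ≤ S ^ 2 * ‖f g‖ ^ 2 :=
                mul_le_mul_of_nonneg_right hkey (by positivity)
      · simp only [hgF, if_false, norm_zero]
        simp only [ne_eq, OfNat.ofNat_ne_zero, not_false_eq_true, zero_pow, zero_mul]
        positivity
    have htsum : (∑' g : G, ‖(if g ∈ F then u g else 0)‖ ^ 2 * (1 + (ℓ g : ℝ)) ^ (2 * k)) ≤
        (S * ‖T‖) ^ 2 := by
      rw [tsum_eq_sum (s := F) (fun g hg => by simp [hg])]
      calc ∑ g ∈ F, ‖(if g ∈ F then u g else 0)‖ ^ 2 * (1 + (ℓ g : ℝ)) ^ (2 * k)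
          ≤ ∑ g ∈ F, S ^ 2 * ‖f g‖ ^ 2 := Finset.sum_le_sum fun g _ => hpt g
      _ = S ^ 2 * ∑ g ∈ F, ‖f g‖ ^ 2 := by rw [Finset.mul_sum]
      _ ≤ S ^ 2 * ‖T‖ ^ 2 := by
            apply mul_le_mul_of_nonneg_left _ (by positivity)
            have hsum2 := lp.sum_rpow_le_norm_rpow (p := 2) (E := fun _ : G => ℂ)
              (by norm_num) ff F
            have h2t : ((2 : ℝ≥0∞)).toReal = 2 := by norm_num
            rw [h2t] at hsum2
            calc ∑ g ∈ F, ‖f g‖ ^ 2 = ∑ g ∈ F, ‖ff g‖ ^ (2 : ℝ) := by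
                  apply Finset.sum_congr rfl
                  intro g _
                  rw [hff, Real.rpow_two]
            _ ≤ ‖ff‖ ^ (2 : ℝ) := hsum2
            _ ≤ ‖T‖ ^ 2 := by
                  rw [Real.rpow_two]
                  exact pow_le_pow_left₀ (norm_nonneg _) hffT 2
      _ = (S * ‖T‖) ^ 2 := by rw [mul_pow]
    have hnn : 0 ≤ ∑' g : G, ‖(if g ∈ F then u g else 0)‖ ^ 2 * (1 + (ℓ g : ℝ)) ^ (2 * k) :=
      tsum_nonneg fun g => by positivity
    calc (∑' g : G, ‖(if g ∈ F then u g else 0)‖ ^ 2 * (1 + (ℓ g : ℝ)) ^ (2 * k)) ^ ((1 : ℝ) / 2)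
        ≤ ((S * ‖T‖) ^ 2) ^ ((1 : ℝ) / 2) :=
          Real.rpow_le_rpow hnn htsum (by norm_num)
    _ = S * ‖T‖ := by
          rw [← Real.rpow_natCast (S * ‖T‖) 2, ← Real.rpow_mul (mul_nonneg hS0 (norm_nonneg T)),
            show ((2 : ℕ) : ℝ) * ((1 : ℝ) / 2) = 1 by norm_num, Real.rpow_one]
  -- conclude via pointwise approximation
  refine ContinuousLinearMap.opNorm_le_bound (Tnt - Tt) hM0 fun h => ?_
  apply lp.norm_le_of_forall_sum_le (by norm_num) (by positivity)
  intro Y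
  have hlim : ∀ y : G, Tendsto (fun F : Finset G => ConvAux.finConvOp u F h y)
      atTop (𝓝 (((Tnt - Tt) h) y)) := by
    intro y
    have hs := (hsum u hu_le h y).hasSum
    rw [← hD h y] at hs
    have heq : (fun F : Finset G => ConvAux.finConvOp u F h y) =
        fun F : Finset G => ∑ x ∈ F, u x * h (x⁻¹ * y) :=
      funext fun F => ConvAux.finConvOp_apply u F h y
    rw [heq]
    exact hs
  have hlim2 : Tendsto
      (fun F : Finset G => ∑ y ∈ Y, ‖ConvAux.finConvOp u F h y‖ ^ (2 : ℝ≥0∞).toReal)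
      atTop (𝓝 (∑ y ∈ Y, ‖((Tnt - Tt) h) y‖ ^ (2 : ℝ≥0∞).toReal)) := by
    apply tendsto_finset_sum
    intro y _
    exact (hlim y).norm.rpow_const (Or.inr (by norm_num))
  refine le_of_tendsto hlim2 (Eventually.of_forall fun F => ?_)
  calc ∑ y ∈ Y, ‖ConvAux.finConvOp u F h y‖ ^ (2 : ℝ≥0∞).toReal
      ≤ ‖ConvAux.finConvOp u F h‖ ^ (2 : ℝ≥0∞).toReal :=
        lp.sum_rpow_le_norm_rpow (by norm_num) _ Y
  _ ≤ (M * ‖h‖) ^ (2 : ℝ≥0∞).toReal := by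
        apply Real.rpow_le_rpow (norm_nonneg _) _ (by norm_num)
        calc ‖ConvAux.finConvOp u F h‖ ≤ ‖ConvAux.finConvOp u F‖ * ‖h‖ :=
              (ConvAux.finConvOp u F).le_opNorm h
        _ ≤ M * ‖h‖ := mul_le_mul_of_nonneg_right (hUF F) (norm_nonneg _)
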